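/- For each k ≥ 1 and n ≥ 0, the evacuation map ev is a bijection from the set of standard k-ribbon Fibonacci tableaux with entries 1, ..., n onto the set of k-ribbon Fibonacci path tableaux with entries 1, ..., n; moreover, ev(P) has the same k-ribbon Fibonacci shape as P. -/

import Mathlib

namespace KRF

/-- A letter of the alphabet `{1_1, …, 1_k, 2}`:  `one j` stands for the letter `1_j`
(with `1 ≤ j ≤ k` for genuine letters), and `two` stands for the letter `2`. -/
inductive Letter (k : ℕ) : Type where
  | one : ℕ → Letter k
  | two : Letter k
deriving DecidableEq

/-- A word over the alphabet `{1_1, …, 1_k, 2}`, listed from the leftmost letter to the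
rightmost letter. -/
abbrev Word (k : ℕ) := List (Letter k)

/-- The contribution of a letter to the rank: each `1_j` counts `1` and each `2` counts `2`. -/
def Letter.rank {k : ℕ} : Letter k → ℕ
  | .one _ => 1
  | .two => 2

/-- The rank of a word: the sum of its letters. -/
def Word.rank {k : ℕ} (w : Word k) : ℕ := (w.map Letter.rank).sum

/-- The letter `1_j` is valid when `1 ≤ j ≤ k`. -/
def Letter.Valid (k : ℕ) : Letter k → Prop
  | .one j => 1 ≤ j ∧ j ≤ k
  | .two => True

/-- A genuine word of the Fibonacci poset `Z(k)`: all of its letters are valid. -/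
def Word.Valid (k : ℕ) (w : Word k) : Prop := ∀ l ∈ w, l.Valid k

/-- The cover relation of the Fibonacci poset `Z(k)`:  `z` is covered by `w` iff `z` is
obtained from `w` either by changing a `2` into some `1_j` when all letters to the left of
that `2` are `2`'s, or by deleting the leftmost letter of the form `1_j`. -/
def ZCovers (k : ℕ) (z w : Word k) : Prop :=
  (∃ (p s : Word k) (j : ℕ), (∀ l ∈ p, l = Letter.two) ∧ 1 ≤ j ∧ j ≤ k ∧
      w = p ++ Letter.two :: s ∧ z = p ++ Letter.one j :: s) ∨
  (∃ (p s : Word k) (j : ℕ), (∀ l ∈ p, l = Letter.two) ∧ 1 ≤ j ∧ j ≤ k ∧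
      w = p ++ Letter.one j :: s ∧ z = p ++ s)

/-- `c 0 ⋖ c 1 ⋖ ⋯ ⋖ c n` is a saturated chain in `Z(k)` starting at the empty word. -/
def IsZChain (k n : ℕ) (c : ℕ → Word k) : Prop :=
  c 0 = [] ∧ ∀ i, i < n → ZCovers k (c i) (c (i + 1))

end KRF
namespace KRF

/-- A column of a (tiled and filled) `k`-ribbon Fibonacci tableau.
`single h v` is a column of height 1 (shape letter `1_h`) tiled by one `k`-ribbon of
height `h` filled with the value `v`.
`double ht hb vt vb` is a column of height 2 (shape letter `2`) tiled by a `k`-ribbon of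
height `ht` filled with `vt` stacked on top of a `k`-ribbon of height `hb` (always
`hb = k + 1 - ht` for genuine tableaux) filled with `vb`. -/
inductive Col (k : ℕ) : Type where
  | single : ℕ → ℕ → Col k
  | double : ℕ → ℕ → ℕ → ℕ → Col k
deriving DecidableEq

/-- A (tiled, filled) `k`-ribbon Fibonacci tableau: its list of columns, from the leftmost
column to the rightmost one. -/
abbrev Tab (k : ℕ) := List (Col k)

/-- The shape letter of a column. -/
def Col.shape {k : ℕ} : Col k → Letter k
  | .single h _ => Letter.one h
  | .double _ _ _ _ => Letter.two

/-- The `k`-ribbon Fibonacci shape (a word) underlying a tableau. -/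
def Tab.shape {k : ℕ} (T : Tab k) : Word k := T.map Col.shape

/-- The value in the bottom `k`-ribbon of a column. -/
def Col.bottomVal {k : ℕ} : Col k → ℕ
  | .single _ v => v
  | .double _ _ _ vb => vb

/-- The heights occurring in a column are genuine ribbon heights: between `1` and `k`,
and in a column of height 2 the two heights sum to `k + 1`. -/
def Col.HeightsValid (k : ℕ) : Col k → Prop
  | .single h _ => 1 ≤ h ∧ h ≤ k
  | .double ht hb _ _ => 1 ≤ ht ∧ ht ≤ k ∧ hb = k + 1 - ht

/-- The list of all entries of a tableau (one for each `k`-ribbon). -/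
def Tab.entries {k : ℕ} (T : Tab k) : List ℕ :=
  (T.map fun c => match c with
    | Col.single _ v => [v]
    | Col.double _ _ vt vb => [vt, vb]).flatten

/-- The list of the bottom-ribbon values of the columns of a tableau. -/
def Tab.bottoms {k : ℕ} (T : Tab k) : List ℕ := T.map Col.bottomVal

/-- `T` is a standard `k`-ribbon Fibonacci tableau with entries `1, …, n`:
heights are valid, the entries are exactly `1, …, n`,  and the tableau can be built by
placing `n, n-1, …, 1` in order, each new `k`-ribbon being either appended (as a new
rightmost height-1 column) to the shape formed by the `k`-ribbons containing larger
entries, or stacked on top of a single such `k`-ribbon.  Equivalently (and this is how we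
formalize it): the bottom entries strictly decrease from left to right (in particular the
`k`-ribbon containing the leftmost square of the bottom row contains `n`), and in each
column of height 2 the top entry is smaller than the bottom entry. -/
def IsStandardTab (k n : ℕ) (T : Tab k) : Prop :=
  (∀ c ∈ T, Col.HeightsValid k c) ∧
  (Tab.entries T).Perm (List.range' 1 n) ∧
  List.Chain' (fun a b => b < a) (Tab.bottoms T) ∧
  (∀ c ∈ T, ∀ ht hb vt vb, c = Col.double ht hb vt vb → vt < vb)

/-- Updating a (partial) path tableau along one cover step `z ⋖ w` of `Z(k)`, placing the
value `i` in the `k` new squares of `w` relative to `z`:  if `w` is obtained from `z` by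
inserting a letter `1_j` after the prefix of `2`'s, a new height-1 column with a single
ribbon of height `j` filled with `i` is created there; if `w` is obtained from `z` by
changing the letter `1_h` just after the prefix of `2`'s into a `2`, the `k` new squares
of that column form a `k`-ribbon of height `k + 1 - h` filled with `i`, stacked on top of
the already present `k`-ribbon of height `h`. -/
def updateTab (k : ℕ) (i : ℕ) : Word k → Word k → Tab k → Tab k
  | Letter.two :: z', Letter.two :: w', c :: T => c :: updateTab k i z' w' T
  | Letter.one h :: _, Letter.two :: _, Col.single _ v :: T =>
      Col.double (k + 1 - h) h i v :: T
  | z, Letter.one j :: w', T => if z = w' then Col.single j i :: T else T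
  | _, _, T => T

/-- The `k`-ribbon Fibonacci path tableau determined by a saturated chain in `Z(k)`:
for each `i = 1, …, n` the value `i` is placed in the `k` new squares of `c i` relative
to `c (i-1)`. -/
def chainTab (k : ℕ) (c : ℕ → Word k) : ℕ → Tab k
  | 0 => []
  | m + 1 => updateTab k (m + 1) (c m) (c (m + 1)) (chainTab k c m)

/-- `T` is a `k`-ribbon Fibonacci path tableau with entries `1, …, n`: it is obtained
from some saturated chain `∅ = c 0 ⋖ c 1 ⋖ ⋯ ⋖ c n` in `Z(k)` by placing `i`'s in the
`k` new squares created at the `i`-th step. -/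
def IsPathTab (k n : ℕ) (T : Tab k) : Prop :=
  ∃ c : ℕ → Word k, IsZChain k n c ∧ T = chainTab k c n

end KRF
namespace KRF

/-- The bubbling phase of one evacuation step.  The current column has an empty bottom
`k`-ribbon, below a `k`-ribbon of height `ht` filled with `a` (`hb` is the height of the
empty ribbon); `rest` is the list of columns strictly to its right.  As long as there is a
ribbon above the empty one, `a` is compared with the entry `b` of the bottom ribbon of the
next column: if `a > b` the ribbon containing `a` drops to the bottom (keeping its height)
and the empty ribbon moves to the top of the column, where it is removed; if `a < b` the
empty ribbon is filled with `b` and the empty ribbon moves to the next column.  The result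
is the position (index relative to the current column, height, whether it was a top
ribbon) of the finally removed empty `k`-ribbon, together with the updated suffix of the
tableau (with the empty ribbon removed and the columns slid left). -/
def evacLoop {k : ℕ} (ht hb a : ℕ) : Tab k → (ℕ × ℕ × Bool) × Tab k
  | [] => ((0, hb, true), [Col.single ht a])
  | c :: rest =>
    if Col.bottomVal c < a then ((0, hb, true), Col.single ht a :: c :: rest)
    else
      match c with
      | Col.single h2 v => ((1, h2, false), Col.double ht hb a v :: rest)
      | Col.double ht' hb' vt' vb' =>
          let r := evacLoop ht' hb' vt' rest
          ((r.1.1 + 1, r.1.2.1, r.1.2.2), Col.double ht hb a vb' :: r.2)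

/-- One evacuation step: erase the entry of the bottom `k`-ribbon of the leftmost column
(the largest entry) and bubble the empty ribbon until it can be removed.  Returns the
position (column index, height, whether it is a top ribbon) of the removed empty
`k`-ribbon together with the remaining (slid) tableau. -/
def evacStep (k : ℕ) : Tab k → (ℕ × ℕ × Bool) × Tab k
  | [] => ((0, 0, false), [])
  | Col.single h _ :: rest => ((0, h, false), rest)
  | Col.double ht hb vt _ :: rest => evacLoop ht hb vt rest

/-- Place the value `v` in a `k`-ribbon of height `h` at the column with index `idx`:
if `isTop = false` a new height-1 column is inserted at index `idx`; if `isTop = true`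
the ribbon is put on top of the (single) ribbon of the column at index `idx`. -/
def placeAt {k : ℕ} : ℕ → ℕ → Bool → ℕ → Tab k → Tab k
  | 0, h, false, v, T => Col.single h v :: T
  | 0, h, true, v, Col.single h0 vb :: rest => Col.double h h0 v vb :: rest
  | 0, _, true, _, T => T
  | idx + 1, h, tp, v, c :: rest => c :: placeAt idx h tp v rest
  | _ + 1, _, _, _, [] => []

/-- The number of `k`-ribbons of a tableau. -/
def Tab.ribbonCount {k : ℕ} (T : Tab k) : ℕ :=
  (T.map fun c => match c with
    | Col.single _ _ => 1
    | Col.double _ _ _ _ => 2).sum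

/-- The evacuation recursion: each step removes the largest remaining entry, bubbles the
empty ribbon to its final position, and records that entry at that position in the
evacuation tableau (which has the same shape as the original tableau).  Each step removes
exactly one `k`-ribbon, so `Tab.ribbonCount T` steps suffice. -/
def evacAux (k : ℕ) : ℕ → Tab k → Tab k
  | 0, _ => []
  | _ + 1, [] => []
  | fuel + 1, c :: rest =>
      let s := evacStep k (c :: rest)
      placeAt s.1.1 s.1.2.1 s.1.2.2 (Col.bottomVal c) (evacAux k fuel s.2)

/-- The evacuation `ev(P)` of a (standard) `k`-ribbon Fibonacci tableau. -/
def evac (k : ℕ) (T : Tab k) : Tab k := evacAux k (Tab.ribbonCount T) T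

end KRF
namespace KRF

/-! ### Auxiliary definitions for the proof -/

/-- The standardness conditions of a tableau other than the entries being `1, …, n`. -/
def StdIsh (k : ℕ) (T : Tab k) : Prop :=
  (∀ c ∈ T, Col.HeightsValid k c) ∧
  List.Chain' (fun a b => b < a) (Tab.bottoms T) ∧
  (∀ c ∈ T, ∀ ht hb vt vb, c = Col.double ht hb vt vb → vt < vb)

/-- Validity of a position `(idx, h, tp)` with respect to a shape word. -/
def PosValidW (k : ℕ) : ℕ → ℕ → Bool → Word k → Prop
  | 0, h, false, _ => 1 ≤ h ∧ h ≤ k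
  | 0, h, true, w => ∃ s w', w = Letter.one s :: w' ∧ h = k + 1 - s
  | idx + 1, h, tp, w => ∃ w', w = Letter.two :: w' ∧ PosValidW k idx h tp w'

/-- The inverse of one evacuation step: re-insert the value `N` (the new largest entry)
whose empty ribbon was removed at position `(idx, h, tp)`, reversing the bubbling. -/
def unloop (k N : ℕ) : ℕ → ℕ → Bool → Tab k → Tab k
  | 0, h, false, T => Col.single h N :: T
  | 0, _, true, Col.single s a :: rest => Col.double s (k + 1 - s) a N :: rest
  | 0, _, true, T => T
  | idx + 1, h, tp, Col.double ht hb vt vb :: rest =>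
      Col.double ht hb vt N :: unloop k vb idx h tp rest
  | _ + 1, _, _, T => T

/-- Find the (unique) ribbon with value `v` and remove it, returning its position. -/
def findRemove (k v : ℕ) : Tab k → (ℕ × ℕ × Bool) × Tab k
  | [] => ((0, 0, false), [])
  | Col.single h x :: rest =>
      if x = v then ((0, h, false), rest)
      else
        let r := findRemove k v rest
        ((r.1.1 + 1, r.1.2), Col.single h x :: r.2)
  | Col.double ht hb vt vb :: rest =>
      if vt = v then ((0, ht, true), Col.single hb vb :: rest)
      else
        let r := findRemove k v rest
        ((r.1.1 + 1, r.1.2), Col.double ht hb vt vb :: r.2)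

/-- The inverse of evacuation. -/
def unevac (k : ℕ) : ℕ → Tab k → Tab k
  | 0, _ => []
  | m + 1, P =>
      let r := findRemove k (m + 1) P
      unloop k (m + 1) r.1.1 r.1.2.1 r.1.2.2 (unevac k m r.2)

/-- All entries of `T` are `< N`. -/
def AllLt (N : ℕ) {k : ℕ} (T : Tab k) : Prop := ∀ x ∈ Tab.entries T, x < N

/-! ### Basic lemmas -/

@[simp] lemma entries_nil (k : ℕ) : Tab.entries ([] : Tab k) = [] := rfl

@[simp] lemma entries_single (k h v : ℕ) (T : Tab k) :
    Tab.entries (Col.single h v :: T) = v :: Tab.entries T := rfl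

@[simp] lemma entries_double (k ht hb vt vb : ℕ) (T : Tab k) :
    Tab.entries (Col.double ht hb vt vb :: T) = vt :: vb :: Tab.entries T := rfl

@[simp] lemma bottoms_nil (k : ℕ) : Tab.bottoms ([] : Tab k) = [] := rfl

@[simp] lemma bottoms_cons (k : ℕ) (c : Col k) (T : Tab k) :
    Tab.bottoms (c :: T) = Col.bottomVal c :: Tab.bottoms T := rfl

@[simp] lemma shape_nil (k : ℕ) : Tab.shape ([] : Tab k) = [] := rfl

@[simp] lemma shape_cons (k : ℕ) (c : Col k) (T : Tab k) :
    Tab.shape (c :: T) = Col.shape c :: Tab.shape T := rfl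

lemma entries_eq_nil {k : ℕ} {T : Tab k} (h : Tab.entries T = []) : T = [] := by
  cases T with
  | nil => rfl
  | cons c rest => cases c <;> simp_all

lemma bottomVal_mem_entries {k : ℕ} {T : Tab k} {c : Col k} (hc : c ∈ T) :
    Col.bottomVal c ∈ Tab.entries T := by
  induction T with
  | nil => simp at hc
  | cons d rest ih =>
    rcases List.mem_cons.1 hc with rfl | hc2
    · cases c <;> simp [Col.bottomVal]
    · cases d <;> simp [ih hc2]

@[simp] theorem _root_.List.chain'_iff_isChain' {α : Type*} {R : α → α → Prop} {l : List α} :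
    List.Chain' R l ↔ List.IsChain R l := Iff.rfl

theorem _root_.List.chain'_cons' {α : Type*} {R : α → α → Prop} {x : α} {l : List α} :
    List.Chain' R (x :: l) ↔ (∀ y ∈ l.head?, R x y) ∧ List.Chain' R l :=
  List.isChain_cons

lemma stdIsh_tail {k : ℕ} {c : Col k} {T : Tab k} (h : StdIsh k (c :: T)) : StdIsh k T := by
  obtain ⟨h1, h2, h3⟩ := h
  refine ⟨fun d hd => h1 d (by simp [hd]), ?_, fun d hd => h3 d (by simp [hd])⟩
  simpa [List.chain'_cons'] using h2.tail

/-- In a std-ish tableau all entries are at most the bottom value of the first column. -/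
lemma entries_le_head {k : ℕ} {c : Col k} {T : Tab k} (h : StdIsh k (c :: T)) :
    ∀ x ∈ Tab.entries (c :: T), x ≤ Col.bottomVal c := by
  induction T generalizing c with
  | nil =>
    intro x hx
    obtain ⟨h1, h2, h3⟩ := h
    cases c with
    | single hh v => simp_all [Col.bottomVal]
    | double ht hb vt vb =>
      have := h3 _ (by simp) ht hb vt vb rfl
      simp [Col.bottomVal] at hx ⊢
      rcases hx with rfl | rfl <;> omega
  | cons d rest ih =>
    intro x hx
    obtain ⟨h1, h2, h3⟩ := h
    have hd : Col.bottomVal d < Col.bottomVal c := by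
      simp only [bottoms_cons, List.chain'_cons'] at h2
      simpa using h2.1
    have htail : StdIsh k (d :: rest) := stdIsh_tail ⟨h1, h2, h3⟩
    have hcx : x ∈ Tab.entries [c] ∨ x ∈ Tab.entries (d :: rest) := by
      cases c <;> simp_all <;> tauto
    rcases hcx with hcx | hcx
    · cases c with
      | single hh v => simp_all [Col.bottomVal]
      | double ht hb vt vb =>
        have := h3 _ (by simp) ht hb vt vb rfl
        simp [Col.bottomVal] at hcx ⊢
        rcases hcx with rfl | rfl <;> omega
    · exact le_trans (ih htail x hcx) (le_of_lt hd)

lemma allLt_of_stdIsh {k : ℕ} {c : Col k} {T : Tab k} (h : StdIsh k (c :: T)) :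
    AllLt (Col.bottomVal c) T := by
  intro x hx
  cases T with
  | nil => simp at hx
  | cons d rest =>
    have h1 := entries_le_head (stdIsh_tail h) x hx
    have h2 : Col.bottomVal d < Col.bottomVal c := by
      obtain ⟨-, h2, -⟩ := h
      simp only [bottoms_cons, List.chain'_cons'] at h2
      simpa using h2.1
    omega

lemma ribbonCount_eq_length {k : ℕ} (T : Tab k) :
    Tab.ribbonCount T = (Tab.entries T).length := by
  induction T with
  | nil => rfl
  | cons c rest ih => cases c <;> simp [Tab.ribbonCount, Tab.entries] at * <;> omega

/-! ### Lemmas about `unloop` -/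

lemma unloop_cons {k N idx h : ℕ} {tp : Bool} {T : Tab k}
    (pv : PosValidW k idx h tp (Tab.shape T)) :
    ∃ c L, unloop k N idx h tp T = c :: L ∧ Col.bottomVal c = N := by
  match idx, tp, T with
  | 0, false, T => exact ⟨_, _, rfl, rfl⟩
  | 0, true, T =>
    obtain ⟨s, w', hw, hh⟩ := pv
    match T with
    | [] => simp at hw
    | Col.single s' a :: rest =>
      exact ⟨_, _, rfl, rfl⟩
    | Col.double _ _ _ _ :: rest => simp [Col.shape] at hw
  | idx + 1, tp, T =>
    obtain ⟨w', hw, pv'⟩ := pv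
    match T with
    | [] => simp at hw
    | Col.single _ _ :: rest => simp [Col.shape] at hw
    | Col.double ht hb vt vb :: rest => exact ⟨_, _, rfl, rfl⟩

lemma entries_unloop {k : ℕ} : ∀ {idx h : ℕ} {tp : Bool} {T : Tab k} (N : ℕ),
    PosValidW k idx h tp (Tab.shape T) →
    (Tab.entries (unloop k N idx h tp T)).Perm (N :: Tab.entries T) := by
  intro idx h tp
  induction idx with
  | zero =>
    intro T N pv
    cases tp with
    | false => simp [unloop]
    | true =>
      obtain ⟨s, w', hw, hh⟩ := pv
      match T with
      | [] => simp at hw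
      | Col.single s' a :: rest =>
        simp only [unloop, entries_double, entries_single]
        exact List.Perm.swap _ _ _
      | Col.double _ _ _ _ :: rest => simp [Col.shape] at hw
  | succ idx ih =>
    intro T N pv
    obtain ⟨w', hw, pv'⟩ := pv
    match T with
    | [] => simp at hw
    | Col.single _ _ :: rest => simp [Col.shape] at hw
    | Col.double ht hb vt vb :: rest =>
      simp only [unloop, entries_double]
      have hpv : PosValidW k idx h tp (Tab.shape rest) := by
        simp only [shape_cons, Col.shape] at hw
        cases hw; exact pv'
      have p1 := ((ih vb hpv).cons N).cons vt
      exact p1.trans (List.Perm.swap _ _ _)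

lemma chain_cons_of_allLt {k N : ℕ} {T : Tab k} (h1 : AllLt N T)
    (h2 : List.Chain' (fun a b => b < a) (Tab.bottoms T)) :
    List.Chain' (fun a b => b < a) (N :: Tab.bottoms T) := by
  rw [List.chain'_cons']
  refine ⟨?_, h2⟩
  intro y hy
  cases T with
  | nil => simp at hy
  | cons c rest =>
    simp at hy
    subst hy
    exact h1 _ (bottomVal_mem_entries (List.mem_cons_self))

lemma allLt_mono {k N : ℕ} {c : Col k} {T : Tab k} (h : AllLt N (c :: T)) : AllLt N T := by
  intro x hx
  apply h
  cases c <;> simp_all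

lemma stdIsh_unloop {k : ℕ} : ∀ {idx h : ℕ} {tp : Bool} {T : Tab k} (N : ℕ),
    PosValidW k idx h tp (Tab.shape T) → StdIsh k T → AllLt N T →
    StdIsh k (unloop k N idx h tp T) := by
  intro idx h tp
  induction idx with
  | zero =>
    intro T N pv std alt
    cases tp with
    | false =>
      obtain ⟨std1, std2, std3⟩ := std
      simp only [unloop]
      refine ⟨?_, ?_, ?_⟩
      · rw [List.forall_mem_cons]
        exact ⟨pv, std1⟩
      · exact chain_cons_of_allLt alt std2
      · rw [List.forall_mem_cons]
        exact ⟨fun ht hb vt vb hc => by simp at hc, std3⟩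
    | true =>
      obtain ⟨s, w', hw, hh⟩ := pv
      match T with
      | [] => simp at hw
      | Col.single s' a :: rest =>
        obtain ⟨std1, std2, std3⟩ := std
        have hs : Col.HeightsValid k (Col.single s' a) := std1 _ (List.mem_cons_self)
        simp only [unloop]
        refine ⟨?_, ?_, ?_⟩
        · rw [List.forall_mem_cons]
          refine ⟨⟨hs.1, hs.2, rfl⟩, fun c hc => std1 c (by simp [hc])⟩
        · exact chain_cons_of_allLt (allLt_mono alt)
            (by simpa [List.chain'_cons', Tab.bottoms] using (List.chain'_cons'.1 std2).2)
        · rw [List.forall_mem_cons]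
          refine ⟨?_, fun c hc => std3 c (by simp [hc])⟩
          intro ht hb vt vb hc
          cases hc
          exact alt a (by simp)
      | Col.double _ _ _ _ :: rest => simp [Col.shape] at hw
  | succ idx ih =>
    intro T N pv std alt
    obtain ⟨w', hw, pv'⟩ := pv
    match T with
    | [] => simp at hw
    | Col.single _ _ :: rest => simp [Col.shape] at hw
    | Col.double ht hb vt vb :: rest =>
      have hpv : PosValidW k idx h tp (Tab.shape rest) := by
        simp only [shape_cons, Col.shape] at hw
        cases hw; exact pv'
      obtain ⟨std1, std2, std3⟩ := std
      have stdr : StdIsh k rest := stdIsh_tail ⟨std1, std2, std3⟩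
      have altr : AllLt vb rest := allLt_of_stdIsh ⟨std1, std2, std3⟩
      have IH := ih vb hpv stdr altr
      obtain ⟨i1, i2, i3⟩ := IH
      have altu : AllLt N (unloop k vb idx h tp rest) := by
        intro x hx
        have hmem := (entries_unloop (k := k) vb hpv).mem_iff.1 hx
        rcases List.mem_cons.1 hmem with rfl | hx'
        · exact alt x (by simp)
        · refine alt x ?_
          simp only [entries_double, List.mem_cons]
          tauto
      simp only [unloop]
      refine ⟨?_, ?_, ?_⟩
      · rw [List.forall_mem_cons]
        refine ⟨?_, i1⟩
        have hd := std1 _ (List.mem_cons_self)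
        exact hd
      · exact chain_cons_of_allLt altu i2
      · rw [List.forall_mem_cons]
        refine ⟨?_, i3⟩
        intro ht' hb' vt' vb' hc
        cases hc
        exact alt vt (by simp)


lemma unloop_shape_false {k : ℕ} : ∀ {idx h : ℕ} {T : Tab k} (N : ℕ),
    PosValidW k idx h false (Tab.shape T) →
    ∃ p ss, (∀ l ∈ p, l = Letter.two) ∧ p.length = idx ∧
      Tab.shape T = p ++ ss ∧
      Tab.shape (unloop k N idx h false T) = p ++ Letter.one h :: ss := by
  intro idx h
  induction idx with
  | zero =>
    intro T N pv
    exact ⟨[], Tab.shape T, by simp, rfl, by simp [Col.shape], by simp [unloop, Col.shape]⟩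
  | succ idx ih =>
    intro T N pv
    obtain ⟨w', hw, pv'⟩ := pv
    match T with
    | [] => simp at hw
    | Col.single _ _ :: rest => simp [Col.shape] at hw
    | Col.double ht hb vt vb :: rest =>
      have hpv : PosValidW k idx h false (Tab.shape rest) := by
        simp only [shape_cons, Col.shape] at hw
        cases hw; exact pv'
      obtain ⟨p, ss, hp, hl, hs1, hs2⟩ := ih (T := rest) vb hpv
      refine ⟨Letter.two :: p, ss, ?_, by simp [hl], ?_, ?_⟩
      · intro l hl'
        rcases List.mem_cons.1 hl' with rfl | hl'
        · rfl
        · exact hp l hl'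
      · simp [Col.shape, hs1]
      · simp [unloop, Col.shape, hs2]

lemma unloop_shape_true {k : ℕ} : ∀ {idx h : ℕ} {T : Tab k} (N : ℕ),
    PosValidW k idx h true (Tab.shape T) →
    ∃ p s ss, (∀ l ∈ p, l = Letter.two) ∧ p.length = idx ∧ h = k + 1 - s ∧
      Tab.shape T = p ++ Letter.one s :: ss ∧
      Tab.shape (unloop k N idx h true T) = p ++ Letter.two :: ss := by
  intro idx h
  induction idx with
  | zero =>
    intro T N pv
    obtain ⟨s, w', hw, hh⟩ := pv
    match T with
    | [] => simp at hw
    | Col.single s' a :: rest =>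
      simp only [shape_cons, Col.shape] at hw
      injection hw with hw1 hw2
      injection hw1 with hs
      subst hs
      exact ⟨[], s', Tab.shape rest, by simp, rfl, hh, by simp [Col.shape], by simp [unloop, Col.shape]⟩
    | Col.double _ _ _ _ :: rest => simp [Col.shape] at hw
  | succ idx ih =>
    intro T N pv
    obtain ⟨w', hw, pv'⟩ := pv
    match T with
    | [] => simp at hw
    | Col.single _ _ :: rest => simp [Col.shape] at hw
    | Col.double ht hb vt vb :: rest =>
      have hpv : PosValidW k idx h true (Tab.shape rest) := by
        simp only [shape_cons, Col.shape] at hw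
        cases hw; exact pv'
      obtain ⟨p, s, ss, hp, hl, hh, hs1, hs2⟩ := ih (T := rest) vb hpv
      refine ⟨Letter.two :: p, s, ss, ?_, by simp [hl], hh, ?_, ?_⟩
      · intro l hl'
        rcases List.mem_cons.1 hl' with rfl | hl'
        · rfl
        · exact hp l hl'
      · simp [Col.shape, hs1]
      · simp [unloop, Col.shape, hs2]

/-! ### `evacStep` of `unloop` -/

lemma evacLoop_unloop {k : ℕ} : ∀ {idx h : ℕ} {tp : Bool} {rest : Tab k} (b a ht hb : ℕ),
    a < b → StdIsh k rest → PosValidW k idx h tp (Tab.shape rest) →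
    evacLoop (k := k) ht hb a (unloop k b idx h tp rest) =
      ((idx + 1, h, tp), Col.double ht hb a b :: rest) := by
  intro idx h tp
  induction idx with
  | zero =>
    intro rest b a ht hb hab std pv
    cases tp with
    | false =>
      simp only [unloop, evacLoop]
      rw [if_neg (by simp only [Col.bottomVal]; omega)]
    | true =>
      obtain ⟨s, w', hw, hh⟩ := pv
      match rest with
      | [] => simp at hw
      | Col.single s' v :: r =>
        simp only [shape_cons, Col.shape] at hw
        injection hw with hw1 hw2
        injection hw1 with hs
        subst hs hh
        simp only [unloop, evacLoop]
        rw [if_neg (by simp only [Col.bottomVal]; omega)]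
        match r with
        | [] => simp [evacLoop]
        | c' :: r' =>
          have hlt : Col.bottomVal c' < v := by
            obtain ⟨-, std2, -⟩ := std
            simp only [bottoms_cons, List.chain'_cons'] at std2
            simpa [Col.bottomVal] using std2.1
          simp [evacLoop, if_pos hlt]
      | Col.double _ _ _ _ :: r => simp [Col.shape] at hw
  | succ idx ih =>
    intro rest b a ht hb hab std pv
    obtain ⟨w', hw, pv'⟩ := pv
    match rest with
    | [] => simp at hw
    | Col.single _ _ :: r => simp [Col.shape] at hw
    | Col.double ht' hb' t' b' :: r =>
      have hpv : PosValidW k idx h tp (Tab.shape r) := by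
        simp only [shape_cons, Col.shape] at hw
        cases hw; exact pv'
      have ht'b' : t' < b' := std.2.2 _ (List.mem_cons_self) _ _ _ _ rfl
      have stdr : StdIsh k r := stdIsh_tail std
      have IH := ih b' t' ht' hb' ht'b' stdr hpv
      simp only [unloop, evacLoop]
      rw [if_neg (by simp only [Col.bottomVal]; omega)]
      simp [IH]

lemma evacStep_unloop {k : ℕ} : ∀ {idx h : ℕ} {tp : Bool} {T : Tab k} (N : ℕ),
    PosValidW k idx h tp (Tab.shape T) → StdIsh k T →
    evacStep k (unloop k N idx h tp T) = ((idx, h, tp), T) := by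
  intro idx h tp T N pv std
  match idx, tp, T with
  | 0, false, T => rfl
  | 0, true, T =>
    obtain ⟨s, w', hw, hh⟩ := pv
    match T with
    | [] => simp at hw
    | Col.single s' v :: r =>
      simp only [shape_cons, Col.shape] at hw
      injection hw with hw1 hw2
      injection hw1 with hs
      subst hs hh
      simp only [unloop, evacStep]
      match r with
      | [] => simp [evacLoop]
      | c' :: r' =>
        have hlt : Col.bottomVal c' < v := by
          obtain ⟨-, std2, -⟩ := std
          simp only [bottoms_cons, List.chain'_cons'] at std2
          simpa [Col.bottomVal] using std2.1
        simp [evacLoop, if_pos hlt]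
    | Col.double _ _ _ _ :: r => simp [Col.shape] at hw
  | idx + 1, tp, T =>
    obtain ⟨w', hw, pv'⟩ := pv
    match T with
    | [] => simp at hw
    | Col.single _ _ :: r => simp [Col.shape] at hw
    | Col.double ht hb t b :: r =>
      have hpv : PosValidW k idx h tp (Tab.shape r) := by
        simp only [shape_cons, Col.shape] at hw
        cases hw; exact pv'
      have htb : t < b := std.2.2 _ (List.mem_cons_self) _ _ _ _ rfl
      have stdr : StdIsh k r := stdIsh_tail std
      simp only [unloop, evacStep]
      exact evacLoop_unloop b t ht hb htb stdr hpv

/-! ### Decomposition of a standard tableau -/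

lemma exists_decomp {k : ℕ} : ∀ {T : Tab k}, StdIsh k T → (Tab.entries T).Nodup →
    T ≠ [] → ∃ idx h tp T₀ c L, T = c :: L ∧
      PosValidW k idx h tp (Tab.shape T₀) ∧ StdIsh k T₀ ∧
      T = unloop k (Col.bottomVal c) idx h tp T₀ := by
  intro T
  induction T with
  | nil => intro _ _ hne; exact absurd rfl hne
  | cons c rest ih =>
    intro std nd _
    obtain ⟨std1, std2, std3⟩ := std
    cases c with
    | single hh v =>
      have hv : Col.HeightsValid k (Col.single hh v) := std1 _ (List.mem_cons_self)
      exact ⟨0, hh, false, rest, _, rest, rfl, hv, stdIsh_tail ⟨std1, std2, std3⟩, rfl⟩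
    | double ht hb vt vb =>
      have hv : Col.HeightsValid k (Col.double ht hb vt vb) := std1 _ (List.mem_cons_self)
      obtain ⟨hv1, hv2, hv3⟩ := hv
      have hvt : vt < vb := std3 _ (List.mem_cons_self) _ _ _ _ rfl
      cases rest with
      | nil =>
        refine ⟨0, hb, true, [Col.single ht vt], _, [], rfl,
          ⟨ht, [], by simp [Col.shape], hv3⟩, ?_, ?_⟩
        · refine ⟨?_, by simp, by simp⟩
          intro d hd
          rcases List.mem_singleton.1 hd with rfl
          exact ⟨hv1, hv2⟩
        · simp only [unloop, Col.bottomVal]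
          rw [← hv3]
      | cons c' r' =>
        have hbmem : Col.bottomVal c' ∈ Tab.entries (c' :: r') :=
          bottomVal_mem_entries (List.mem_cons_self)
        have hne : vt ≠ Col.bottomVal c' := by
          simp only [entries_double, List.nodup_cons] at nd
          intro hq
          exact nd.1 (by simp [hq, hbmem])
        have stdr : StdIsh k (c' :: r') := stdIsh_tail ⟨std1, std2, std3⟩
        rcases lt_or_gt_of_ne hne with hgt | hlt
        · -- vt < bottomVal c' : recurse
          have ndr : (Tab.entries (c' :: r')).Nodup := by
            simp only [entries_double, List.nodup_cons] at nd
            exact nd.2.2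
          obtain ⟨idx', h', tp', T₀', c'', L'', heq, pv', std', hun⟩ :=
            ih stdr ndr (by simp)
          cases heq
          have hb' : Col.bottomVal c' ∈ Tab.entries (c' :: r') := hbmem
          -- entries of (c'::r') perm (bottomVal c' :: entries T₀')
          have hperm : (Tab.entries (c' :: r')).Perm
              (Col.bottomVal c' :: Tab.entries T₀') := by
            rw [hun]
            exact entries_unloop _ pv'
          have hall : AllLt (Col.bottomVal c') T₀' := by
            intro x hx
            have hx1 : x ∈ Tab.entries (c' :: r') := hperm.mem_iff.2 (by simp [hx])
            have hx2 : x ≤ Col.bottomVal c' := entries_le_head stdr x hx1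
            have hx3 : x ≠ Col.bottomVal c' := by
              have hnd2 := hperm.nodup_iff.1 ndr
              rintro rfl
              exact (List.nodup_cons.1 hnd2).1 hx
            omega
          obtain ⟨s1, s2, s3⟩ := std'
          refine ⟨idx' + 1, h', tp', Col.double ht hb vt (Col.bottomVal c') :: T₀',
            _, c' :: r', rfl, ⟨Tab.shape T₀', by simp [Col.shape], pv'⟩, ?_, ?_⟩
          · refine ⟨?_, ?_, ?_⟩
            · rw [List.forall_mem_cons]
              exact ⟨⟨hv1, hv2, hv3⟩, s1⟩
            · exact chain_cons_of_allLt hall s2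
            · rw [List.forall_mem_cons]
              refine ⟨?_, s3⟩
              intro a1 a2 a3 a4 hc
              cases hc
              exact hgt
          · simp only [unloop, Col.bottomVal]
            exact congrArg _ hun
        · -- bottomVal c' < vt : stop immediately
          refine ⟨0, hb, true, Col.single ht vt :: c' :: r', _, c' :: r', rfl,
            ⟨ht, Tab.shape (c' :: r'), by simp [Col.shape], hv3⟩, ?_, ?_⟩
          · obtain ⟨s1, s2, s3⟩ := stdr
            refine ⟨?_, ?_, ?_⟩
            · rw [List.forall_mem_cons]
              exact ⟨⟨hv1, hv2⟩, s1⟩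
            · rw [bottoms_cons, List.chain'_cons']
              exact ⟨by simpa [Col.bottomVal] using hlt, s2⟩
            · rw [List.forall_mem_cons]
              exact ⟨fun a1 a2 a3 a4 hc => by simp at hc, s3⟩
          · simp only [unloop, Col.bottomVal]
            rw [← hv3]

/-! ### `placeAt`, `findRemove`, `updateTab` -/

lemma updateTab_one_eq (k i j : ℕ) (z : Word k) (T : Tab k) :
    updateTab k i z (Letter.one j :: z) T = Col.single j i :: T := by
  cases z with
  | nil =>
    cases T with
    | nil => simp [updateTab]
    | cons c T => cases c <;> simp [updateTab]
  | cons l z =>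
    cases T with
    | nil => cases l <;> simp [updateTab]
    | cons c T => cases l <;> cases c <;> simp [updateTab]

lemma findRemove_placeAt {k : ℕ} : ∀ {idx h : ℕ} {tp : Bool} {P : Tab k} (v : ℕ),
    PosValidW k idx h tp (Tab.shape P) → v ∉ Tab.entries P →
    findRemove k v (placeAt idx h tp v P) = ((idx, h, tp), P) := by
  intro idx h tp
  induction idx with
  | zero =>
    intro P v pv hv
    cases tp with
    | false => simp [placeAt, findRemove]
    | true =>
      obtain ⟨s, w', hw, hh⟩ := pv
      cases P with
      | nil => simp at hw
      | cons c r =>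
        cases c with
        | single s' x => simp [placeAt, findRemove]
        | double _ _ _ _ => simp [Col.shape] at hw
  | succ idx ih =>
    intro P v pv hv
    obtain ⟨w', hw, pv'⟩ := pv
    cases P with
    | nil => simp at hw
    | cons c r =>
      cases c with
      | single _ _ => simp [Col.shape] at hw
      | double ht hb vt vb =>
        have hpv : PosValidW k idx h tp (Tab.shape r) := by
          simp only [shape_cons, Col.shape] at hw
          cases hw; exact pv'
        have hvt : vt ≠ v := by
          intro hq
          exact hv (by simp [hq])
        have hvr : v ∉ Tab.entries r := fun hq => hv (by simp [hq])
        have IH := ih (P := r) v hpv hvr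
        simp [placeAt, findRemove, hvt, IH]

lemma placeAt_shape_congr {k : ℕ} : ∀ {idx h : ℕ} {tp : Bool} {P Q : Tab k} (v w : ℕ),
    Tab.shape P = Tab.shape Q →
    Tab.shape (placeAt (k := k) idx h tp v P) = Tab.shape (placeAt (k := k) idx h tp w Q) := by
  intro idx h tp
  induction idx with
  | zero =>
    intro P Q v w hpq
    cases tp with
    | false => simp [placeAt, Col.shape, hpq]
    | true =>
      cases P with
      | nil =>
        cases Q with
        | nil => rfl
        | cons d q => simp at hpq
      | cons c p =>
        cases Q with
        | nil => simp at hpq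
        | cons d q =>
          simp only [shape_cons] at hpq
          injection hpq with h1 h2
          cases c with
          | single s x =>
            cases d with
            | single s' y =>
              simp only [Col.shape] at h1
              injection h1 with hs
              subst hs
              simp [placeAt, Col.shape, h2]
            | double _ _ _ _ => simp [Col.shape] at h1
          | double a1 a2 a3 a4 =>
            cases d with
            | single _ _ => simp [Col.shape] at h1
            | double _ _ _ _ => simp [placeAt, Col.shape, h1, h2]
  | succ idx ih =>
    intro P Q v w hpq
    cases P with
    | nil =>
      cases Q with
      | nil => rfl
      | cons d q => simp at hpq
    | cons c p =>
      cases Q with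
      | nil => simp at hpq
      | cons d q =>
        simp only [shape_cons] at hpq
        injection hpq with h1 h2
        simp [placeAt, h1, ih (P := p) (Q := q) v w h2]

lemma placeAt_shape_unloop {k : ℕ} : ∀ {idx h : ℕ} {tp : Bool} {T : Tab k} (v N : ℕ),
    PosValidW k idx h tp (Tab.shape T) →
    Tab.shape (placeAt (k := k) idx h tp v T) = Tab.shape (unloop k N idx h tp T) := by
  intro idx h tp
  induction idx with
  | zero =>
    intro T v N pv
    cases tp with
    | false => simp [placeAt, unloop, Col.shape]
    | true =>
      obtain ⟨s, w', hw, hh⟩ := pv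
      cases T with
      | nil => simp at hw
      | cons c r =>
        cases c with
        | single s' x => simp [placeAt, unloop, Col.shape]
        | double _ _ _ _ => simp [Col.shape] at hw
  | succ idx ih =>
    intro T v N pv
    obtain ⟨w', hw, pv'⟩ := pv
    cases T with
    | nil => simp at hw
    | cons c r =>
      cases c with
      | single _ _ => simp [Col.shape] at hw
      | double ht hb vt vb =>
        have hpv : PosValidW k idx h tp (Tab.shape r) := by
          simp only [shape_cons, Col.shape] at hw
          cases hw; exact pv'
        simp [placeAt, unloop, Col.shape, ih (T := r) v vb hpv]

lemma entries_placeAt {k : ℕ} : ∀ {idx h : ℕ} {tp : Bool} {P : Tab k} (v : ℕ),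
    PosValidW k idx h tp (Tab.shape P) →
    (Tab.entries (placeAt (k := k) idx h tp v P)).Perm (v :: Tab.entries P) := by
  intro idx h tp
  induction idx with
  | zero =>
    intro P v pv
    cases tp with
    | false => simp [placeAt]
    | true =>
      obtain ⟨s, w', hw, hh⟩ := pv
      cases P with
      | nil => simp at hw
      | cons c r =>
        cases c with
        | single s' x => simp [placeAt]
        | double _ _ _ _ => simp [Col.shape] at hw
  | succ idx ih =>
    intro P v pv
    obtain ⟨w', hw, pv'⟩ := pv
    cases P with
    | nil => simp at hw
    | cons c r =>
      cases c with
      | single _ _ => simp [Col.shape] at hw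
      | double ht hb vt vb =>
        have hpv : PosValidW k idx h tp (Tab.shape r) := by
          simp only [shape_cons, Col.shape] at hw
          cases hw; exact pv'
        have IH := ih (P := r) v hpv
        simp only [placeAt, entries_double]
        have p1 := (IH.cons vb).cons vt
        refine p1.trans ?_
        have p2 : (vt :: vb :: v :: Tab.entries r).Perm (vt :: v :: vb :: Tab.entries r) :=
          (List.Perm.swap v vb _).cons vt
        exact p2.trans (List.Perm.swap v vt _)

lemma posW_of_decomp_false {k h : ℕ} (hh : 1 ≤ h ∧ h ≤ k) :
    ∀ (p ss : Word k), (∀ l ∈ p, l = Letter.two) →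
      PosValidW k p.length h false (p ++ ss) := by
  intro p ss hp
  induction p with
  | nil => exact hh
  | cons l p' ih =>
    have hl : l = Letter.two := hp l (List.mem_cons_self)
    subst hl
    exact ⟨p' ++ ss, rfl, ih fun l hl => hp l (by simp [hl])⟩

lemma posW_of_decomp_true {k s : ℕ} :
    ∀ (p ss : Word k), (∀ l ∈ p, l = Letter.two) →
      PosValidW k p.length (k + 1 - s) true (p ++ Letter.one s :: ss) := by
  intro p ss hp
  induction p with
  | nil => exact ⟨s, ss, rfl, rfl⟩
  | cons l p' ih =>
    have hl : l = Letter.two := hp l (List.mem_cons_self)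
    subst hl
    exact ⟨p' ++ Letter.one s :: ss, rfl, ih fun l hl => hp l (by simp [hl])⟩

lemma updateTab_insert {k i j : ℕ} : ∀ (p ss : Word k) (P : Tab k),
    (∀ l ∈ p, l = Letter.two) → Tab.shape P = p ++ ss →
    updateTab k i (p ++ ss) (p ++ Letter.one j :: ss) P = placeAt p.length j false i P := by
  intro p
  induction p with
  | nil =>
    intro ss P hp hs
    simpa [placeAt] using updateTab_one_eq k i j ss P
  | cons l p' ih =>
    intro ss P hp hs
    have hl : l = Letter.two := hp l (List.mem_cons_self)
    subst hl
    cases P with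
    | nil => simp at hs
    | cons c r =>
      simp only [shape_cons, List.cons_append] at hs
      injection hs with h1 h2
      cases c with
      | single _ _ => simp [Col.shape] at h1
      | double ht hb vt vb =>
        show Col.double ht hb vt vb ::
            updateTab k i (p' ++ ss) (p' ++ Letter.one j :: ss) r = _
        rw [ih ss r (fun l hl => hp l (by simp [hl])) h2]
        rfl

lemma updateTab_change {k i j : ℕ} : ∀ (p ss : Word k) (P : Tab k),
    (∀ l ∈ p, l = Letter.two) → Tab.shape P = p ++ Letter.one j :: ss →
    updateTab k i (p ++ Letter.one j :: ss) (p ++ Letter.two :: ss) P =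
      placeAt p.length (k + 1 - j) true i P := by
  intro p
  induction p with
  | nil =>
    intro ss P hp hs
    cases P with
    | nil => simp at hs
    | cons c r =>
      simp only [shape_cons, List.nil_append] at hs
      injection hs with h1 h2
      cases c with
      | single s' x =>
        simp only [Col.shape] at h1
        injection h1 with hj
        subst hj
        rfl
      | double _ _ _ _ => simp [Col.shape] at h1
  | cons l p' ih =>
    intro ss P hp hs
    have hl : l = Letter.two := hp l (List.mem_cons_self)
    subst hl
    cases P with
    | nil => simp at hs
    | cons c r =>
      simp only [shape_cons, List.cons_append] at hs
      injection hs with h1 h2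
      cases c with
      | single _ _ => simp [Col.shape] at h1
      | double ht hb vt vb =>
        show Col.double ht hb vt vb ::
            updateTab k i (p' ++ Letter.one j :: ss) (p' ++ Letter.two :: ss) r = _
        rw [ih ss r (fun l hl => hp l (by simp [hl])) h2]
        rfl

lemma shape_updateTab {k i : ℕ} {z w : Word k} {P : Tab k}
    (hc : ZCovers k z w) (hP : Tab.shape P = z) :
    Tab.shape (updateTab k i z w P) = w := by
  rcases hc with ⟨p, ss, j, hp, hj1, hj2, hw, hz⟩ | ⟨p, ss, j, hp, hj1, hj2, hw, hz⟩
  · -- change case : z = p ++ one j :: ss, w = p ++ two :: ss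
    subst hw hz
    rw [updateTab_change p ss P hp hP]
    have pv := posW_of_decomp_true (k := k) (s := j) p ss hp
    rw [placeAt_shape_unloop (N := 0) i (by rw [hP]; exact pv)]
    obtain ⟨p', s', ss', hp', hl', hh', hs1, hs2⟩ :=
      unloop_shape_true (T := P) (N := 0) (by rw [hP]; exact pv)
    rw [hs2]
    rw [hP] at hs1
    obtain ⟨hpp, hss⟩ := List.append_inj hs1 (by omega)
    injection hss with hss1 hss2
    rw [hpp, hss2]
  · -- insert case : z = p ++ ss, w = p ++ one j :: ss
    subst hw hz
    rw [updateTab_insert p ss P hp hP]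
    have pv := posW_of_decomp_false (k := k) (h := j) ⟨hj1, hj2⟩ p ss hp
    rw [placeAt_shape_unloop (N := 0) i (by rw [hP]; exact pv)]
    obtain ⟨p', ss', hp', hl', hs1, hs2⟩ :=
      unloop_shape_false (T := P) (N := 0) (by rw [hP]; exact pv)
    rw [hs2]
    rw [hP] at hs1
    obtain ⟨hpp, hss⟩ := List.append_inj hs1 (by omega)
    rw [hpp, hss]

lemma heights_of_shape_one {k s : ℕ} {T : Tab k}
    (hv : ∀ c ∈ T, Col.HeightsValid k c) (hs : Letter.one s ∈ Tab.shape T) :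
    1 ≤ s ∧ s ≤ k := by
  simp only [Tab.shape, List.mem_map] at hs
  obtain ⟨c, hc, hcs⟩ := hs
  cases c with
  | single h' v =>
    simp only [Col.shape] at hcs
    injection hcs with hq
    subst hq
    exact hv _ hc
  | double _ _ _ _ => simp [Col.shape] at hcs

/-! ### chains -/

lemma chainTab_congr {k : ℕ} {c c' : ℕ → Word k} :
    ∀ m, (∀ i ≤ m, c' i = c i) → chainTab k c' m = chainTab k c m := by
  intro m
  induction m with
  | zero => intro _; rfl
  | succ m ih =>
    intro hm
    show updateTab k (m + 1) (c' m) (c' (m + 1)) (chainTab k c' m) = _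
    rw [hm m (by omega), hm (m + 1) le_rfl, ih fun i hi => hm i (by omega)]
    rfl

lemma shape_chainTab {k n : ℕ} {c : ℕ → Word k} (hc : IsZChain k n c) :
    ∀ m ≤ n, Tab.shape (chainTab k c m) = c m := by
  intro m
  induction m with
  | zero => intro _; exact hc.1.symm
  | succ m ih =>
    intro hm
    show Tab.shape (updateTab k (m + 1) (c m) (c (m + 1)) (chainTab k c m)) = _
    exact shape_updateTab (hc.2 m (by omega)) (ih (by omega))

/-! ### The master induction -/

lemma isStandard_iff {k n : ℕ} {T : Tab k} :
    IsStandardTab k n T ↔ StdIsh k T ∧ (Tab.entries T).Perm (List.range' 1 n) := by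
  constructor
  · rintro ⟨h1, h2, h3, h4⟩
    exact ⟨⟨h1, h3, h4⟩, h2⟩
  · rintro ⟨⟨h1, h3, h4⟩, h2⟩
    exact ⟨h1, h2, h3, h4⟩

lemma range'_succ_concat (n : ℕ) : List.range' 1 (n + 1) = List.range' 1 n ++ [n + 1] := by
  have := List.range'_concat (s := 1) (n := n) (step := 1)
  simpa [Nat.add_comm] using this

lemma posW_false_bounds {k : ℕ} : ∀ {idx h : ℕ} {w : Word k},
    PosValidW k idx h false w → 1 ≤ h ∧ h ≤ k := by
  intro idx
  induction idx with
  | zero => intro h w pv; exact pv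
  | succ idx ih =>
    intro h w pv
    obtain ⟨w', -, pv'⟩ := pv
    exact ih pv'

lemma evac_cons {k n idx h : ℕ} {tp : Bool} {T T₀ : Tab k} {c : Col k} {L : Tab k}
    (hTc : T = c :: L) (hstep : evacStep k T = ((idx, h, tp), T₀))
    (hrc : Tab.ribbonCount T = n + 1) (hrc₀ : Tab.ribbonCount T₀ = n) :
    evac k T = placeAt idx h tp (Col.bottomVal c) (evac k T₀) := by
  subst hTc
  show evacAux k (Tab.ribbonCount (c :: L)) (c :: L) = _
  rw [hrc]
  simp only [evacAux, hstep]
  rw [evac, hrc₀]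

lemma ribbonCount_of_perm {k n : ℕ} {T : Tab k}
    (h : (Tab.entries T).Perm (List.range' 1 n)) : Tab.ribbonCount T = n := by
  rw [ribbonCount_eq_length, h.length_eq, List.length_range']

lemma zcovers_of_unloop_false {k N idx h : ℕ} {T₀ : Tab k}
    (pv : PosValidW k idx h false (Tab.shape T₀)) :
    ZCovers k (Tab.shape T₀) (Tab.shape (unloop k N idx h false T₀)) := by
  obtain ⟨p, ss, hp, hl, hs1, hs2⟩ := unloop_shape_false (T := T₀) N pv
  obtain ⟨hh1, hh2⟩ := posW_false_bounds pv
  exact Or.inr ⟨p, ss, h, hp, hh1, hh2, hs2, hs1⟩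

lemma zcovers_of_unloop_true {k N idx h : ℕ} {T₀ : Tab k}
    (hv : ∀ c ∈ T₀, Col.HeightsValid k c)
    (pv : PosValidW k idx h true (Tab.shape T₀)) :
    ZCovers k (Tab.shape T₀) (Tab.shape (unloop k N idx h true T₀)) := by
  obtain ⟨p, s, ss, hp, hl, hh, hs1, hs2⟩ := unloop_shape_true (T := T₀) N pv
  have hs : 1 ≤ s ∧ s ≤ k := heights_of_shape_one hv (by rw [hs1]; simp)
  exact Or.inl ⟨p, ss, s, hp, hs.1, hs.2, hs2, hs1⟩

lemma master {k : ℕ} (hk : 1 ≤ k) : ∀ (n : ℕ) (T : Tab k), IsStandardTab k n T →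
    unevac k n (evac k T) = T ∧ (Tab.entries (evac k T)).Perm (List.range' 1 n) ∧
    Tab.shape (evac k T) = Tab.shape T ∧ IsPathTab k n (evac k T) := by
  intro n
  induction n with
  | zero =>
    intro T hT
    obtain ⟨std, hperm⟩ := isStandard_iff.1 hT
    have hTnil : T = [] := entries_eq_nil (by simpa using hperm)
    subst hTnil
    refine ⟨rfl, by simp [evac, Tab.ribbonCount, evacAux], rfl, ?_⟩
    exact ⟨fun _ => [], ⟨rfl, fun i hi => absurd hi (by omega)⟩, rfl⟩
  | succ n ih =>
    intro T hT
    obtain ⟨std, hperm⟩ := isStandard_iff.1 hT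
    have hnd : (Tab.entries T).Nodup := hperm.nodup_iff.2 (List.nodup_range')
    have hTne : T ≠ [] := by
      intro hq
      subst hq
      have := hperm.length_eq
      simp [List.length_range'] at this
    obtain ⟨idx, h, tp, T₀, c, L, hTc, pv, std₀, hun⟩ := exists_decomp std hnd hTne
    -- the head bottom value is n + 1
    have hmax : ∀ x ∈ Tab.entries T, x ≤ Col.bottomVal c := by
      rw [hTc] at std ⊢
      exact entries_le_head std
    have hcmem : Col.bottomVal c ∈ Tab.entries T := by
      rw [hTc]
      exact bottomVal_mem_entries (List.mem_cons_self)
    have hble : Col.bottomVal c ≤ n + 1 := by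
      have := hperm.mem_iff.1 hcmem
      rw [List.mem_range'_1] at this
      omega
    have hn1mem : (n + 1) ∈ Tab.entries T := by
      refine hperm.mem_iff.2 ?_
      rw [List.mem_range'_1]
      omega
    have hbc : Col.bottomVal c = n + 1 := le_antisymm hble (hmax _ hn1mem)
    rw [hbc] at hun
    -- entries of T₀
    have hET : (Tab.entries T).Perm ((n + 1) :: Tab.entries T₀) := by
      rw [hun]
      exact entries_unloop _ pv
    have hperm₀ : (Tab.entries T₀).Perm (List.range' 1 n) := by
      have h1 : ((n + 1) :: Tab.entries T₀).Perm ((n + 1) :: List.range' 1 n) := by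
        refine (hET.symm.trans hperm).trans ?_
        rw [range'_succ_concat]
        exact List.perm_append_singleton _ _
      exact h1.cons_inv
    have hT₀ : IsStandardTab k n T₀ := isStandard_iff.2 ⟨std₀, hperm₀⟩
    obtain ⟨ih1, ih2, ih3, ih4⟩ := ih T₀ hT₀
    have hstep : evacStep k T = ((idx, h, tp), T₀) := by
      rw [hun]
      exact evacStep_unloop _ pv std₀
    have hrc : Tab.ribbonCount T = n + 1 := ribbonCount_of_perm hperm
    have hrc₀ : Tab.ribbonCount T₀ = n := ribbonCount_of_perm hperm₀
    have hevac : evac k T = placeAt idx h tp (n + 1) (evac k T₀) := by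
      rw [evac_cons hTc hstep hrc hrc₀, hbc]
    have pv' : PosValidW k idx h tp (Tab.shape (evac k T₀)) := by
      rw [ih3]; exact pv
    have hnotin : (n + 1) ∉ Tab.entries (evac k T₀) := by
      intro hq
      have := ih2.mem_iff.1 hq
      rw [List.mem_range'_1] at this
      omega
    have hshape : Tab.shape (evac k T) = Tab.shape T := by
      rw [hevac, placeAt_shape_congr (Q := T₀) _ (n + 1) ih3,
        placeAt_shape_unloop (N := n + 1) _ pv, ← hun]
    refine ⟨?_, ?_, hshape, ?_⟩
    · -- unevac
      simp only [unevac]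
      rw [hevac, findRemove_placeAt _ pv' hnotin]
      simp only
      rw [ih1, ← hun]
    · -- entries
      rw [hevac]
      refine ((entries_placeAt _ pv').trans ?_)
      refine ((ih2.cons _).trans ?_)
      rw [range'_succ_concat]
      exact (List.perm_append_singleton _ _).symm
    · -- path
      obtain ⟨cc, hcc, hP₀⟩ := ih4
      have hccn : cc n = Tab.shape T₀ := by
        rw [← shape_chainTab hcc n le_rfl, ← hP₀, ih3]
      refine ⟨fun i => if i ≤ n then cc i else Tab.shape T, ⟨?_, ?_⟩, ?_⟩
      · simp [hcc.1]
      · intro i hi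
        beta_reduce
        rcases Nat.lt_or_ge i n with hin | hin
        · rw [if_pos (by omega), if_pos (by omega)]
          exact hcc.2 i hin
        · have hieq : i = n := by omega
          rw [hieq, if_pos le_rfl, if_neg (by omega), hccn]
          have hzc : ZCovers k (Tab.shape T₀) (Tab.shape (unloop k (n + 1) idx h tp T₀)) := by
            cases tp with
            | false => exact zcovers_of_unloop_false pv
            | true => exact zcovers_of_unloop_true std₀.1 pv
          rw [hun]
          exact hzc
      · show evac k T = updateTab k (n + 1)
            (if n ≤ n then cc n else Tab.shape T)
            (if n + 1 ≤ n then cc (n + 1) else Tab.shape T)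
            (chainTab k (fun i => if i ≤ n then cc i else Tab.shape T) n)
        rw [if_pos le_rfl, if_neg (by omega)]
        have hcteq : chainTab k (fun i => if i ≤ n then cc i else Tab.shape T) n =
            chainTab k cc n := chainTab_congr n (fun i hi => if_pos hi)
        rw [hcteq, ← hP₀, hccn, hevac]
        cases tp with
        | false =>
          obtain ⟨p, ss, hp, hl, hs1, hs2⟩ := unloop_shape_false (T := T₀) (n + 1) pv
          have hsT : Tab.shape T = p ++ Letter.one h :: ss := by rw [hun, hs2]
          rw [hsT, hs1, updateTab_insert p ss (evac k T₀) hp (by rw [ih3, hs1]), hl]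
        | true =>
          obtain ⟨p, s, ss, hp, hl, hh, hs1, hs2⟩ := unloop_shape_true (T := T₀) (n + 1) pv
          have hsT : Tab.shape T = p ++ Letter.two :: ss := by rw [hun, hs2]
          rw [hsT, hs1, updateTab_change p ss (evac k T₀) hp (by rw [ih3, hs1]), hl, ← hh]

lemma surj {k : ℕ} (hk : 1 ≤ k) : ∀ (n : ℕ) (P : Tab k), IsPathTab k n P →
    ∃ T, IsStandardTab k n T ∧ evac k T = P := by
  intro n
  induction n with
  | zero =>
    intro P hP
    obtain ⟨cc, hcc, hP⟩ := hP
    refine ⟨[], ?_, ?_⟩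
    · exact ⟨by simp, by simp, by simp [Tab.bottoms], by simp⟩
    · rw [hP]; rfl
  | succ n ih =>
    intro P hP
    obtain ⟨cc, hcc, hP⟩ := hP
    have hcc' : IsZChain k n cc := ⟨hcc.1, fun i hi => hcc.2 i (by omega)⟩
    obtain ⟨T₀, hT₀, hev⟩ := ih (chainTab k cc n) ⟨cc, hcc', rfl⟩
    obtain ⟨std₀, hperm₀⟩ := isStandard_iff.1 hT₀
    obtain ⟨-, -, hsh₀, -⟩ := master hk n T₀ hT₀
    have hshape₀ : Tab.shape T₀ = cc n := by
      rw [← hsh₀, hev]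
      exact shape_chainTab hcc n (by omega)
    have hallt : AllLt (n + 1) T₀ := by
      intro x hx
      have := hperm₀.mem_iff.1 hx
      rw [List.mem_range'_1] at this
      omega
    have hrc₀ : Tab.ribbonCount T₀ = n := ribbonCount_of_perm hperm₀
    have hcov := hcc.2 n (by omega)
    -- common construction
    have main : ∀ idx h tp, PosValidW k idx h tp (Tab.shape T₀) →
        placeAt idx h tp (n + 1) (chainTab k cc n) = P →
        ∃ T, IsStandardTab k (n + 1) T ∧ evac k T = P := by
      intro idx h tp pv hplace
      set T := unloop k (n + 1) idx h tp T₀ with hT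
      have std : StdIsh k T := stdIsh_unloop _ pv std₀ hallt
      have hent : (Tab.entries T).Perm (List.range' 1 (n + 1)) := by
        refine (entries_unloop _ pv).trans ?_
        rw [range'_succ_concat]
        refine ((hperm₀.cons _).trans ?_)
        exact (List.perm_append_singleton _ _).symm
      have hstep : evacStep k T = ((idx, h, tp), T₀) := evacStep_unloop _ pv std₀
      obtain ⟨c, L, hTc, hbc⟩ := unloop_cons (N := n + 1) pv
      have hrc : Tab.ribbonCount T = n + 1 := ribbonCount_of_perm hent
      refine ⟨T, isStandard_iff.2 ⟨std, hent⟩, ?_⟩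
      rw [evac_cons hTc hstep hrc hrc₀, hbc, hev, hplace]
    rcases hcov with ⟨p, ss, j, hp, hj1, hj2, hw, hz⟩ | ⟨p, ss, j, hp, hj1, hj2, hw, hz⟩
    · -- change case : cc n = p ++ one j :: ss → cc (n+1) = p ++ two :: ss
      refine main p.length (k + 1 - j) true ?_ ?_
      · rw [hshape₀, hz]
        exact posW_of_decomp_true p ss hp
      · rw [hP]
        show _ = updateTab k (n + 1) (cc n) (cc (n + 1)) (chainTab k cc n)
        rw [hz, hw, updateTab_change p ss (chainTab k cc n) hp
          (by rw [shape_chainTab hcc n (by omega), hz])]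
    · -- insert case : cc n = p ++ ss → cc (n+1) = p ++ one j :: ss
      refine main p.length j false ?_ ?_
      · rw [hshape₀, hz]
        exact posW_of_decomp_false ⟨hj1, hj2⟩ p ss hp
      · rw [hP]
        show _ = updateTab k (n + 1) (cc n) (cc (n + 1)) (chainTab k cc n)
        rw [hz, hw, updateTab_insert p ss (chainTab k cc n) hp
          (by rw [shape_chainTab hcc n (by omega), hz])]

end KRF

namespace KRF

/-- For each `k ≥ 1` and `n ≥ 0`, the evacuation map `ev` is a
bijection from the set of standard `k`-ribbon Fibonacci tableaux with entries `1, …, n`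
onto the set of `k`-ribbon Fibonacci path tableaux with entries `1, …, n`; moreover
`ev(P)` has the same `k`-ribbon Fibonacci shape as `P`. -/
theorem evac_bijOn (k n : ℕ) (hk : 1 ≤ k) :
    Set.BijOn (evac k) {T : Tab k | IsStandardTab k n T} {T : Tab k | IsPathTab k n T} ∧
    ∀ T : Tab k, IsStandardTab k n T → Tab.shape (evac k T) = Tab.shape T := by
  refine ⟨⟨?_, ?_, ?_⟩, ?_⟩
  · intro T hT
    exact (master hk n T hT).2.2.2
  · intro T₁ h₁ T₂ h₂ heq
    have e₁ := (master hk n T₁ h₁).1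
    have e₂ := (master hk n T₂ h₂).1
    rw [← e₁, ← e₂, heq]
  · intro P hP
    obtain ⟨T, hT, hev⟩ := surj hk n P hP
    exact ⟨T, hT, hev⟩
  · intro T hT
    exact (master hk n T hT).2.2.1

end KRF
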